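/- If η₁* > η₂* then σ₂ < Δ_μ/Δ_α < σ₃. -/

import Mathlib

/-- If η₁* > η₂* then σ₂ < Δ_μ/Δ_α < σ₃. -/
theorem stmt_3 (r a1 a2 a3 m1 m2 m3 e1 e2 s1 s2 s3 A1 A2 E1 E2 Da Dm : ℝ)
    (hr : 0 < r) (ha1 : 0 < a1) (ha2 : 0 < a2) (ha3 : 0 < a3)
    (hm1 : 0 < m1) (hm2 : 0 < m2) (hm3 : 0 < m3) (he1 : 0 < e1) (he2 : 0 < e2)
    (hs1 : s1 = m1 / a1) (hs2 : s2 = m2 / a2) (hs3 : s3 = m3 / a3)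
    (h12 : s1 < s2) (h23 : s2 < s3)
    (hA1 : A1 = a1 * a3 * (s3 - s1) / r) (hA2 : A2 = a2 * a3 * (s3 - s2) / r)
    (hE1 : E1 = e1 / A1) (hE2 : E2 = e2 / A2)
    (hDa : Da = a2 * e1 - a1 * e2) (hDm : Dm = m2 * e1 - m1 * e2)
    (h : E1 > E2) :
    s2 < Dm / Da ∧ Dm / Da < s3 := by
  have hs31 : 0 < s3 - s1 := by linarith
  have hs32 : 0 < s3 - s2 := by linarith
  have hA1p : 0 < A1 := by rw [hA1]; positivity
  have hA2p : 0 < A2 := by rw [hA2]; positivity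
  have hm1' : m1 = s1 * a1 := by rw [hs1]; field_simp
  have hm2' : m2 = s2 * a2 := by rw [hs2]; field_simp
  have h' : e2 * A1 < e1 * A2 := by
    rw [hE1, hE2] at h
    exact (div_lt_div_iff₀ hA2p hA1p).mp h
  have key : e2 * (a1 * (s3 - s1)) < e1 * (a2 * (s3 - s2)) := by
    rw [hA1, hA2, ← mul_div_assoc, ← mul_div_assoc,
      div_lt_div_iff_of_pos_right hr] at h'
    have h3 : e2 * (a1 * (s3 - s1)) * a3 < e1 * (a2 * (s3 - s2)) * a3 := by
      nlinarith [h']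
    exact (mul_lt_mul_iff_of_pos_right ha3).mp h3
  have hDap : 0 < Da := by
    rw [hDa]
    nlinarith [key, hs32, mul_pos (mul_pos he2 ha1) (sub_pos.mpr h12)]
  constructor
  · rw [lt_div_iff₀ hDap, hDm, hDa, hm1', hm2']
    nlinarith [mul_pos he2 (mul_pos ha1 (sub_pos.mpr h12))]
  · rw [div_lt_iff₀ hDap, hDm, hDa, hm1', hm2']
    nlinarith
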